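/- For every n ≥ 1, the signed complete graph (K_n,+) in which all edges are positive satisfies ψ(K_n,+) = n. -/

import Mathlib

open SimpleGraph

/-- A signature on a graph: a symmetric assignment of signs (`1` or `-1`) to pairs of
vertices (only the values on edges are relevant). -/
def IsSignature {V : Type*} (σ : V → V → ℤ) : Prop :=
  (∀ u v, σ u v = σ v u) ∧ (∀ u v, σ u v = 1 ∨ σ u v = -1)

/-- `σ'` is obtained from `σ` by switching a set of vertices: every vertex gets a
switching value `±1`, and the sign of an edge is multiplied by the values at its ends. -/
def SwitchEquiv {V : Type*} (σ σ' : V → V → ℤ) : Prop :=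
  ∃ s : V → ℤ, (∀ v, s v = 1 ∨ s v = -1) ∧ ∀ u v, σ' u v = s u * s v * σ u v

/-- The colour set `M_k`, as a set of integers: `{±1, …, ±n}` if `k = 2n`, and
`{-n, …, -1, 0, 1, …, n}` if `k = 2n+1` (colour `±0` is represented by `0`). -/
def colourSet (k : ℕ) : Set ℤ :=
  if Even k then {i | i ≠ 0 ∧ i.natAbs ≤ k / 2} else {i | i.natAbs ≤ k / 2}

/-- A proper `k`-colouring of the signed graph `(G, σ)`: colours come from `M_k` and,
for each edge `uv`, `φ u ≠ σ(uv) · φ v`. -/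
def IsProperColouring {V : Type*} (G : SimpleGraph V) (σ : V → V → ℤ) (k : ℕ)
    (φ : V → ℤ) : Prop :=
  (∀ v, φ v ∈ colourSet k) ∧ ∀ u v, G.Adj u v → φ u ≠ σ u v * φ v

/-- The sign of an integer for the purpose of switching: `-1` for negative colours,
`1` otherwise. -/
def isgn (x : ℤ) : ℤ := if x < 0 then -1 else 1

/-- The sign of the edge `uv` after switching every vertex whose colour is negative. -/
def redSign {V : Type*} (σ : V → V → ℤ) (φ : V → ℤ) (u v : V) : ℤ :=
  isgn (φ u) * isgn (φ v) * σ u v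

/-- After switching all negatively-coloured vertices and taking absolute values of
colours, there is an edge of `(G, σ)` whose ends get values `i` and `j` and whose
resulting sign is `s`. -/
def HasEdgeType {V : Type*} (G : SimpleGraph V) (σ : V → V → ℤ) (φ : V → ℤ)
    (i j : ℕ) (s : ℤ) : Prop :=
  ∃ u v, G.Adj u v ∧ (φ u).natAbs = i ∧ (φ v).natAbs = j ∧ redSign σ φ u v = s

/-- A complete `k`-colouring of the signed graph `(G, σ)`. -/
def IsCompleteColouring {V : Type*} (G : SimpleGraph V) (σ : V → V → ℤ) (k : ℕ)
    (φ : V → ℤ) : Prop :=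
  IsProperColouring G σ k φ ∧
  (∀ i j : ℕ, (i : ℤ) ∈ colourSet k → (j : ℤ) ∈ colourSet k → i ≠ j →
    HasEdgeType G σ φ i j 1 ∧ HasEdgeType G σ φ i j (-1)) ∧
  (∀ i : ℕ, 1 ≤ i → (i : ℤ) ∈ colourSet k → HasEdgeType G σ φ i i (-1))

/-- Some signed graph equivalent to `(G, σ)` admits a complete `k`-colouring. -/
def AdmitsComplete {V : Type*} (G : SimpleGraph V) (σ : V → V → ℤ) (k : ℕ) : Prop :=
  ∃ σ', IsSignature σ' ∧ SwitchEquiv σ σ' ∧ ∃ φ, IsCompleteColouring G σ' k φ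

/-- The achromatic number of the signed graph `(G, σ)`: the largest `k` such that some
signed graph equivalent to `(G, σ)` admits a complete `k`-colouring. -/
noncomputable def psi {V : Type*} (G : SimpleGraph V) (σ : V → V → ℤ) : ℕ :=
  sSup {k | AdmitsComplete G σ k}

/-- The chromatic number of the signed graph `(G, σ)`: the smallest `k` such that
`(G, σ)` admits a proper `k`-colouring. -/
noncomputable def chi {V : Type*} (G : SimpleGraph V) (σ : V → V → ℤ) : ℕ :=
  sInf {k | ∃ φ, IsProperColouring G σ k φ}


section Aux

lemma mem_colourSet_iff {k : ℕ} {c : ℤ} :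
    c ∈ colourSet k ↔ c.natAbs ≤ k / 2 ∧ (Even k → c ≠ 0) := by
  unfold colourSet
  split_ifs with h <;> simp only [Set.mem_setOf_eq] <;> tauto

lemma neg_mem_colourSet {k : ℕ} {c : ℤ} (hc : c ∈ colourSet k) : -c ∈ colourSet k := by
  rw [mem_colourSet_iff] at hc ⊢
  simpa using hc

/-- The canonical bijection `Fin n → M_n`. -/
def col (n : ℕ) (v : Fin n) : ℤ :=
  if (v : ℕ) < n / 2 then (v : ℤ) - n / 2
  else (v : ℤ) - n / 2 + (if Even n then 1 else 0)

lemma col_inj (n : ℕ) : Function.Injective (col n) := by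
  intro u v h
  have hu := u.isLt; have hv := v.isLt
  rcases Nat.even_or_odd n with he | ho
  · have hm : n % 2 = 0 := Nat.even_iff.mp he
    unfold col at h
    rw [if_pos he] at h
    split_ifs at h <;> (apply Fin.ext; omega)
  · have hm : n % 2 = 1 := Nat.odd_iff.mp ho
    unfold col at h
    rw [if_neg (Nat.not_even_iff_odd.mpr ho)] at h
    split_ifs at h <;> (apply Fin.ext; omega)

lemma col_mem (n : ℕ) (v : Fin n) : col n v ∈ colourSet n := by
  rw [mem_colourSet_iff]
  have hv := v.isLt
  unfold col
  rcases Nat.even_or_odd n with he | ho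
  · have hm : n % 2 = 0 := Nat.even_iff.mp he
    rw [if_pos he]
    split_ifs <;> exact ⟨by omega, fun _ => by omega⟩
  · have hm : n % 2 = 1 := Nat.odd_iff.mp ho
    have hne := Nat.not_even_iff_odd.mpr ho
    rw [if_neg hne]
    split_ifs <;> exact ⟨by omega, fun h => absurd h hne⟩

lemma col_surj (n : ℕ) (c : ℤ) (hc : c ∈ colourSet n) : ∃ v : Fin n, col n v = c := by
  rw [mem_colourSet_iff] at hc
  rcases Nat.even_or_odd n with he | ho
  · have hm : n % 2 = 0 := Nat.even_iff.mp he
    have hc0 : c ≠ 0 := hc.2 he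
    rcases lt_or_ge c 0 with h0 | h0
    · refine ⟨⟨(c + n / 2).toNat, by omega⟩, ?_⟩
      unfold col
      rw [if_pos he]
      split_ifs <;> simp only [Fin.val_mk] at * <;> push_cast <;> omega
    · refine ⟨⟨(c + n / 2 - 1).toNat, by omega⟩, ?_⟩
      unfold col
      rw [if_pos he]
      split_ifs <;> simp only [Fin.val_mk] at * <;> push_cast <;> omega
  · have hm : n % 2 = 1 := Nat.odd_iff.mp ho
    refine ⟨⟨(c + n / 2).toNat, by omega⟩, ?_⟩
    unfold col
    rw [if_neg (Nat.not_even_iff_odd.mpr ho)]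
    split_ifs <;> push_cast <;> omega

lemma isgn_of_nonneg {x : ℤ} (h : 0 ≤ x) : isgn x = 1 := by
  unfold isgn; rw [if_neg (by omega)]

lemma isgn_of_neg {x : ℤ} (h : x < 0) : isgn x = -1 := by
  unfold isgn; rw [if_pos h]

lemma isgn_natCast (i : ℕ) : isgn (i : ℤ) = 1 := isgn_of_nonneg (by positivity)

lemma admits_n (n : ℕ) :
    AdmitsComplete (⊤ : SimpleGraph (Fin n)) (fun _ _ => 1) n := by
  refine ⟨fun _ _ => 1, ⟨fun _ _ => rfl, fun _ _ => Or.inl rfl⟩,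
    ⟨fun _ => 1, fun _ => Or.inl rfl, fun _ _ => by ring⟩, col n, ?_, ?_, ?_⟩
  · exact ⟨col_mem n, fun u v huv h => huv.ne (col_inj n (by rw [h]; ring))⟩
  · intro i j hi hj hij
    constructor
    · obtain ⟨u, hu⟩ := col_surj n i hi
      obtain ⟨v, hv⟩ := col_surj n j hj
      refine ⟨u, v, ?_, by rw [hu]; simp, by rw [hv]; simp, ?_⟩
      · have : u ≠ v := by
          intro h; apply hij
          have : (i : ℤ) = (j : ℤ) := by rw [← hu, ← hv, h]
          exact_mod_cast this
        simpa [SimpleGraph.top_adj] using this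
      · unfold redSign
        rw [hu, hv, isgn_natCast, isgn_natCast]; ring
    · rcases Nat.eq_zero_or_pos j with hj0 | hj0
      · subst hj0
        have hi0 : 1 ≤ i := Nat.one_le_iff_ne_zero.mpr hij
        obtain ⟨u, hu⟩ := col_surj n (-(i : ℤ)) (neg_mem_colourSet hi)
        obtain ⟨v, hv⟩ := col_surj n 0 hj
        refine ⟨u, v, ?_, by rw [hu]; simp, by rw [hv]; simp, ?_⟩
        · have : u ≠ v := by
            intro h; rw [h, hv] at hu
            omega
          simpa [SimpleGraph.top_adj] using this
        · unfold redSign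
          rw [hu, hv, isgn_of_neg (by omega), isgn_of_nonneg le_rfl]; ring
      · obtain ⟨u, hu⟩ := col_surj n i hi
        obtain ⟨v, hv⟩ := col_surj n (-(j : ℤ)) (neg_mem_colourSet hj)
        refine ⟨u, v, ?_, by rw [hu]; simp, by rw [hv]; simp, ?_⟩
        · have : u ≠ v := by
            intro h; rw [h, hv] at hu
            omega
          simpa [SimpleGraph.top_adj] using this
        · unfold redSign
          rw [hu, hv, isgn_natCast, isgn_of_neg (by omega)]; ring
  · intro i hi1 hi
    obtain ⟨u, hu⟩ := col_surj n i hi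
    obtain ⟨v, hv⟩ := col_surj n (-(i : ℤ)) (neg_mem_colourSet hi)
    refine ⟨u, v, ?_, by rw [hu]; simp, by rw [hv]; simp, ?_⟩
    · have : u ≠ v := by
        intro h; rw [h, hv] at hu; omega
      simpa [SimpleGraph.top_adj] using this
    · unfold redSign
      rw [hu, hv, isgn_natCast, isgn_of_neg (by omega)]; ring

lemma le_of_admits (n k : ℕ) (hn : 1 ≤ n)
    (h : AdmitsComplete (⊤ : SimpleGraph (Fin n)) (fun _ _ => 1) k) : k ≤ n := by
  obtain ⟨σ', -, -, φ, ⟨hmem, -⟩, hpairs, hdiag⟩ := h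
  set m := k / 2 with hm
  have habs : ∀ v, (φ v).natAbs ≤ m := by
    intro v
    exact (mem_colourSet_iff.mp (hmem v)).1
  have hcard : n = ∑ i ∈ Finset.range (m + 1),
      (Finset.univ.filter fun v : Fin n => (φ v).natAbs = i).card := by
    have h := Finset.card_eq_sum_card_fiberwise
      (fun v (_ : v ∈ Finset.univ) => Finset.mem_range.mpr (Nat.lt_succ_of_le (habs v)))
    rw [← h, Finset.card_univ, Fintype.card_fin]
  have h2 : ∀ i, 1 ≤ i → i ≤ m →
      2 ≤ (Finset.univ.filter fun v : Fin n => (φ v).natAbs = i).card := by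
    intro i h1 hle
    have hi : (i : ℤ) ∈ colourSet k := by
      rw [mem_colourSet_iff]
      refine ⟨by simpa using hle, fun _ => by exact_mod_cast Nat.one_le_iff_ne_zero.mp h1⟩
    obtain ⟨u, v, hadj, hu, hv, -⟩ := hdiag i h1 hi
    exact Finset.one_lt_card.mpr
      ⟨u, Finset.mem_filter.mpr ⟨Finset.mem_univ u, hu⟩,
       v, Finset.mem_filter.mpr ⟨Finset.mem_univ v, hv⟩, hadj.ne⟩
  have hsum : 2 * m ≤ ∑ i ∈ Finset.range m,
      (Finset.univ.filter fun v : Fin n => (φ v).natAbs = i + 1).card := by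
    calc 2 * m = ∑ _i ∈ Finset.range m, 2 := by simp [mul_comm]
    _ ≤ _ := Finset.sum_le_sum fun i hi =>
        h2 (i + 1) (by omega) (by have := Finset.mem_range.mp hi; omega)
  rw [Finset.sum_range_succ'] at hcard
  rcases Nat.even_or_odd k with he | ho
  · have : k = 2 * m := by have := Nat.even_iff.mp he; omega
    omega
  · have hk : k = 2 * m + 1 := by have := Nat.odd_iff.mp ho; omega
    rcases Nat.eq_zero_or_pos m with hm0 | hm0
    · omega
    · have h0 : 1 ≤ (Finset.univ.filter fun v : Fin n => (φ v).natAbs = 0).card := by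
        have h0c : (0 : ℤ) ∈ colourSet k := by
          rw [mem_colourSet_iff]
          exact ⟨by simp, fun hek => absurd hek (Nat.not_even_iff_odd.mpr ho)⟩
        have h1c : ((1 : ℕ) : ℤ) ∈ colourSet k := by
          rw [mem_colourSet_iff]
          exact ⟨by simp; omega, fun _ => by norm_num⟩
        obtain ⟨⟨u, v, -, hu, -, -⟩, -⟩ :=
          hpairs 0 1 (by exact_mod_cast h0c) h1c (by omega)
        exact Finset.card_pos.mpr ⟨u, Finset.mem_filter.mpr ⟨Finset.mem_univ u, hu⟩⟩
      omega

end Aux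

/-- For every `n ≥ 1`, the all-positive signed complete graph `(K_n, +)`
satisfies `ψ(K_n, +) = n`. -/
theorem statement3 (n : ℕ) (hn : 1 ≤ n) :
    psi (⊤ : SimpleGraph (Fin n)) (fun _ _ => 1) = n := by
  exact IsGreatest.csSup_eq ⟨admits_n n, fun k hk => le_of_admits n k hn hk⟩
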